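/- (Joint maximum likelihood estimation for the spiked GOE model with unknown σ².) Let n ≥ 1 and let X be a real symmetric n×n matrix with spectral decomposition X = Σ_{i=1}^{n} ℓ_i v_i v_iᵀ, where ℓ_1 ≥ ⋯ ≥ ℓ_n are the eigenvalues and v_1, …, v_n are orthonormal eigenvectors. Fix 0 ≤ j ≤ n, define Â_j = Σ_{i=1}^{j} max(ℓ_i, 0) v_i v_iᵀ and σ̂²_j = ‖X − Â_j‖_F²/(n + 1), and assume σ̂²_j > 0. Define the log-likelihood functional L(A, s) = −(n(n+1)/4)·log s − (n/(4s))·‖X − A‖_F² for real symmetric n×n matrices A and s > 0. Then for every real symmetric positive semidefinite n×n matrix B with rank(B) ≤ j and every s > 0, one has L(B, s) ≤ L(Â_j, σ̂²_j). -/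

import Mathlib

section Helpers

lemma contract (n : ℕ) (c d : Fin n → Fin n → ℝ) (f g : Fin n → ℝ) :
    ∑ x : Fin n, (∑ a, f a * c x a) * (∑ b, g b * d x b)
      = ∑ a, ∑ b, (f a * g b) * (∑ x, c x a * d x b) := by
  have h1 : ∀ x : Fin n, (∑ a, f a * c x a) * (∑ b, g b * d x b)
      = ∑ a, ∑ b, (f a * g b) * (c x a * d x b) := by
    intro x
    rw [Finset.sum_mul_sum]
    exact Finset.sum_congr rfl fun a _ => Finset.sum_congr rfl fun b _ => by ring
  simp only [h1, Finset.mul_sum]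
  rw [Finset.sum_comm]
  refine Finset.sum_congr rfl fun a _ => ?_
  rw [Finset.sum_comm]

lemma frob_sq (n : ℕ) (v : Fin n → Fin n → ℝ)
    (horth : ∀ i i' : Fin n, ∑ a, v i a * v i' a = if i = i' then 1 else 0)
    (r : Fin n → ℝ) :
    ∑ a, ∑ b, (∑ i, r i * (v i a * v i b)) ^ 2 = ∑ i, r i ^ 2 := by
  have step1 : ∀ a : Fin n, ∑ b, (∑ i, r i * (v i a * v i b)) ^ 2
      = ∑ i, (r i * v i a) ^ 2 := by
    intro a
    calc ∑ b, (∑ i, r i * (v i a * v i b)) ^ 2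
        = ∑ b, (∑ i, (r i * v i a) * v i b) * (∑ i, (r i * v i a) * v i b) := by
          refine Finset.sum_congr rfl fun b _ => ?_
          rw [sq]
          congr 1 <;> exact Finset.sum_congr rfl fun i _ => by ring
      _ = ∑ i, ∑ i', ((r i * v i a) * (r i' * v i' a)) * (∑ b, v i b * v i' b) :=
          contract n (fun b i => v i b) (fun b i => v i b)
            (fun i => r i * v i a) (fun i => r i * v i a)
      _ = ∑ i, (r i * v i a) ^ 2 := by
          refine Finset.sum_congr rfl fun i _ => ?_
          have h2 : ∀ i' : Fin n, ((r i * v i a) * (r i' * v i' a)) * (∑ b, v i b * v i' b)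
              = if i = i' then (r i * v i a) * (r i' * v i' a) else 0 := by
            intro i'
            rw [horth i i', mul_ite, mul_one, mul_zero]
          simp only [h2]
          rw [Finset.sum_ite_eq]
          simp [sq]
  simp only [step1]
  rw [Finset.sum_comm]
  refine Finset.sum_congr rfl fun i _ => ?_
  calc ∑ a, (r i * v i a) ^ 2 = r i ^ 2 * ∑ a, v i a * v i a := by
        rw [Finset.mul_sum]
        exact Finset.sum_congr rfl fun a _ => by ring
    _ = r i ^ 2 := by rw [horth i i]; simp

lemma frob_cross (n : ℕ) (v w : Fin n → Fin n → ℝ) (r μ : Fin n → ℝ) :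
    ∑ a : Fin n, ∑ b, (∑ i, r i * (v i a * v i b)) * (∑ k, μ k * (w k a * w k b))
      = ∑ i, ∑ k, r i * μ k * (∑ a, v i a * w k a) ^ 2 := by
  have step1 : ∀ a : Fin n, ∑ b, (∑ i, r i * (v i a * v i b)) * (∑ k, μ k * (w k a * w k b))
      = ∑ i, ∑ k, ((r i * v i a) * (μ k * w k a)) * (∑ b, v i b * w k b) := by
    intro a
    have h := contract n (fun b i => v i b) (fun b k => w k b)
      (fun i => r i * v i a) (fun k => μ k * w k a)
    calc ∑ b, (∑ i, r i * (v i a * v i b)) * (∑ k, μ k * (w k a * w k b))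
        = ∑ b, (∑ i, (r i * v i a) * v i b) * (∑ k, (μ k * w k a) * w k b) := by
          refine Finset.sum_congr rfl fun b _ => ?_
          congr 1 <;> exact Finset.sum_congr rfl fun i _ => by ring
      _ = ∑ i, ∑ k, ((r i * v i a) * (μ k * w k a)) * (∑ b, v i b * w k b) := h
  simp only [step1]
  rw [Finset.sum_comm]
  refine Finset.sum_congr rfl fun i _ => ?_
  rw [Finset.sum_comm]
  refine Finset.sum_congr rfl fun k _ => ?_
  calc ∑ a, ((r i * v i a) * (μ k * w k a)) * (∑ b, v i b * w k b)
      = (r i * μ k * (∑ b, v i b * w k b)) * ∑ a, v i a * w k a := by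
        rw [Finset.mul_sum]
        exact Finset.sum_congr rfl fun a _ => by ring
    _ = r i * μ k * (∑ a, v i a * w k a) ^ 2 := by rw [sq]; ring

lemma card_filter_lt (n j : ℕ) (hj : j ≤ n) :
    (Finset.univ.filter (fun i : Fin n => (i : ℕ) < j)).card = j := by
  rcases lt_or_eq_of_le hj with h | h
  · have : Finset.univ.filter (fun i : Fin n => (i : ℕ) < j) = Finset.Iio ⟨j, h⟩ := by
      ext i; simp [Fin.lt_def]
    rw [this, Fin.card_Iio]
  · have : Finset.univ.filter (fun i : Fin n => (i : ℕ) < j) = Finset.univ := by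
      ext i; simpa using h ▸ i.isLt
    simp [this, h]

lemma sorted_weight_bound (n j : ℕ) (hj : j ≤ n) (g c : Fin n → ℝ)
    (hg0 : ∀ i, 0 ≤ g i) (hgmono : ∀ i i' : Fin n, i ≤ i' → g i' ≤ g i)
    (hc0 : ∀ i, 0 ≤ c i) (hc1 : ∀ i, c i ≤ 1) (hcsum : ∑ i, c i ≤ (j : ℝ)) :
    ∑ i, c i * g i ≤ ∑ i ∈ Finset.univ.filter (fun i : Fin n => (i : ℕ) < j), g i := by
  classical
  rcases lt_or_eq_of_le hj with hlt | heq
  case inr =>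
    have huniv : Finset.univ.filter (fun i : Fin n => (i : ℕ) < j) = Finset.univ := by
      ext i; simpa using heq ▸ i.isLt
    rw [huniv]
    exact Finset.sum_le_sum fun i _ => by
      nlinarith [hc0 i, hc1 i, hg0 i]
  case inl =>
    set t : ℝ := g ⟨j, hlt⟩ with ht
    have ht0 : 0 ≤ t := hg0 _
    set P := Finset.univ.filter (fun i : Fin n => (i : ℕ) < j) with hP
    have hcardP : P.card = j := card_filter_lt n j hj
    have hsplit := (Finset.sum_filter_add_sum_filter_not Finset.univ
      (fun i : Fin n => (i : ℕ) < j) (fun i => c i * g i)).symm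
    have h1 : ∀ i ∈ P, c i * g i ≤ g i + (c i - 1) * t := by
      intro i hi
      have hij : (i : ℕ) < j := by simpa [hP] using hi
      have hgt : t ≤ g i := hgmono i ⟨j, hlt⟩ (by simp [Fin.le_def]; omega)
      nlinarith [hc1 i, hc0 i]
    have h2 : ∀ i ∈ Finset.univ.filter (fun i : Fin n => ¬ (i : ℕ) < j),
        c i * g i ≤ c i * t := by
      intro i hi
      have hij : ¬ (i : ℕ) < j := by simpa using hi
      have hgt : g i ≤ t := hgmono ⟨j, hlt⟩ i (by simp [Fin.le_def]; omega)
      exact mul_le_mul_of_nonneg_left hgt (hc0 i)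
    calc ∑ i, c i * g i
        = ∑ i ∈ P, c i * g i
          + ∑ i ∈ Finset.univ.filter (fun i : Fin n => ¬ (i : ℕ) < j), c i * g i := hsplit
      _ ≤ ∑ i ∈ P, (g i + (c i - 1) * t)
          + ∑ i ∈ Finset.univ.filter (fun i : Fin n => ¬ (i : ℕ) < j), c i * t :=
          add_le_add (Finset.sum_le_sum h1) (Finset.sum_le_sum h2)
      _ = ∑ i ∈ P, g i + ((∑ i, c i) - j) * t := by
          rw [Finset.sum_add_distrib]
          have := Finset.sum_filter_add_sum_filter_not Finset.univ
            (fun i : Fin n => (i : ℕ) < j) c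
          simp only [← Finset.sum_mul, Finset.sum_sub_distrib, Finset.sum_const, hcardP,
            nsmul_eq_mul, mul_one]
          rw [← this]
          ring
      _ ≤ ∑ i ∈ P, g i := by nlinarith

lemma key_ineq (n j : ℕ) (hj : j ≤ n) (ℓ : Fin n → ℝ)
    (hmono : ∀ i i' : Fin n, i ≤ i' → ℓ i' ≤ ℓ i)
    (μ : Fin n → ℝ) (hμ : ∀ k, 0 ≤ μ k)
    (hcard : (Finset.univ.filter (fun k : Fin n => μ k ≠ 0)).card ≤ j)
    (U : Fin n → Fin n → ℝ)
    (hcol : ∀ k, ∑ i, U i k ^ 2 = 1)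
    (hrow : ∀ i, ∑ k, U i k ^ 2 = 1) :
    ∑ i, (ℓ i - (if (i : ℕ) < j then max (ℓ i) 0 else 0)) ^ 2
      ≤ ∑ i, ℓ i ^ 2 - 2 * ∑ k, μ k * (∑ i, ℓ i * U i k ^ 2) + ∑ k, μ k ^ 2 := by
  classical
  set g : Fin n → ℝ := fun i => max (ℓ i) 0 ^ 2 with hg
  set q : Fin n → ℝ := fun k => ∑ i, ℓ i * U i k ^ 2 with hq
  set S := Finset.univ.filter (fun k : Fin n => μ k ≠ 0) with hS
  set P := Finset.univ.filter (fun i : Fin n => (i : ℕ) < j) with hP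
  have hLHS : ∑ i, (ℓ i - (if (i : ℕ) < j then max (ℓ i) 0 else 0)) ^ 2
      = ∑ i, ℓ i ^ 2 - ∑ i ∈ P, g i := by
    have h1 : ∀ i : Fin n, (ℓ i - (if (i : ℕ) < j then max (ℓ i) 0 else 0)) ^ 2
        = ℓ i ^ 2 - (if (i : ℕ) < j then g i else 0) := by
      intro i
      by_cases h : (i : ℕ) < j
      · simp only [h, if_true, hg]
        rcases le_total (ℓ i) 0 with h' | h'
        · rw [max_eq_right h']; ring
        · rw [max_eq_left h']; ring
      · simp [h]
    simp only [h1, Finset.sum_sub_distrib, hP, Finset.sum_filter]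
  rw [hLHS]
  have hmain : 2 * ∑ k, μ k * q k - ∑ k, μ k ^ 2 ≤ ∑ i ∈ P, g i := by
    have hk : ∀ k : Fin n, 2 * (μ k * q k) - μ k ^ 2
        ≤ (if μ k ≠ 0 then ∑ i, U i k ^ 2 * g i else 0) := by
      intro k
      by_cases hk0 : μ k = 0
      · simp [hk0]
      · simp only [hk0, ne_eq, not_false_eq_true, if_true]
        have hqb : max (q k) 0 ^ 2 ≤ ∑ i, U i k ^ 2 * g i := by
          have hp0 : (0:ℝ) ≤ ∑ i, U i k ^ 2 * max (ℓ i) 0 :=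
            Finset.sum_nonneg fun i _ =>
              mul_nonneg (sq_nonneg _) (le_max_right _ _)
          have hqp : q k ≤ ∑ i, U i k ^ 2 * max (ℓ i) 0 := by
            apply Finset.sum_le_sum
            intro i _
            nlinarith [sq_nonneg (U i k), le_max_left (ℓ i) 0]
          have hmq : max (q k) 0 ≤ ∑ i, U i k ^ 2 * max (ℓ i) 0 := max_le hqp hp0
          have hsq : max (q k) 0 ^ 2 ≤ (∑ i, U i k ^ 2 * max (ℓ i) 0) ^ 2 :=
            pow_le_pow_left₀ (le_max_right _ _) hmq 2
          have hcs : (∑ i, U i k ^ 2 * max (ℓ i) 0) ^ 2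
              ≤ (∑ i, U i k ^ 2) * (∑ i, (U i k * max (ℓ i) 0) ^ 2) := by
            have := Finset.sum_mul_sq_le_sq_mul_sq Finset.univ
              (fun i => U i k) (fun i => U i k * max (ℓ i) 0)
            calc (∑ i, U i k ^ 2 * max (ℓ i) 0) ^ 2
                = (∑ i, U i k * (U i k * max (ℓ i) 0)) ^ 2 := by
                  congr 1; exact Finset.sum_congr rfl fun i _ => by ring
              _ ≤ (∑ i, U i k ^ 2) * (∑ i, (U i k * max (ℓ i) 0) ^ 2) := this
          rw [hcol k, one_mul] at hcs
          calc max (q k) 0 ^ 2 ≤ (∑ i, U i k ^ 2 * max (ℓ i) 0) ^ 2 := hsq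
            _ ≤ ∑ i, (U i k * max (ℓ i) 0) ^ 2 := hcs
            _ = ∑ i, U i k ^ 2 * g i :=
                Finset.sum_congr rfl fun i _ => by rw [hg]; ring
        have hbr : 2 * (μ k * q k) - μ k ^ 2 ≤ max (q k) 0 ^ 2 := by
          rcases le_total (q k) 0 with h' | h'
          · rw [max_eq_right h']
            nlinarith [hμ k]
          · rw [max_eq_left h']
            nlinarith [sq_nonneg (μ k - q k)]
        linarith
    have hsum1 : 2 * ∑ k, μ k * q k - ∑ k, μ k ^ 2
        ≤ ∑ k ∈ S, ∑ i, U i k ^ 2 * g i := by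
      have h2 := Finset.sum_le_sum (fun k (_ : k ∈ Finset.univ) => hk k)
      have h3 : ∑ k ∈ S, ∑ i, U i k ^ 2 * g i
          = ∑ k, if μ k ≠ 0 then ∑ i, U i k ^ 2 * g i else 0 := by
        rw [hS, Finset.sum_filter]
      rw [← h3] at h2
      have h4 : ∑ k, (2 * (μ k * q k) - μ k ^ 2)
          = 2 * ∑ k, μ k * q k - ∑ k, μ k ^ 2 := by
        rw [Finset.mul_sum, Finset.sum_sub_distrib]
      linarith
    set c : Fin n → ℝ := fun i => ∑ k ∈ S, U i k ^ 2 with hc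
    have hswap : ∑ k ∈ S, ∑ i, U i k ^ 2 * g i = ∑ i, c i * g i := by
      rw [Finset.sum_comm]
      exact Finset.sum_congr rfl fun i _ => by rw [hc, Finset.sum_mul]
    have hc0 : ∀ i, 0 ≤ c i := fun i => Finset.sum_nonneg fun k _ => sq_nonneg _
    have hc1 : ∀ i, c i ≤ 1 := by
      intro i
      rw [hc]
      calc ∑ k ∈ S, U i k ^ 2 ≤ ∑ k, U i k ^ 2 :=
            Finset.sum_le_sum_of_subset_of_nonneg (Finset.filter_subset _ _)
              (fun k _ _ => sq_nonneg _)
        _ = 1 := hrow i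
    have hcsum : ∑ i, c i ≤ (j : ℝ) := by
      rw [hc, Finset.sum_comm]
      calc ∑ k ∈ S, ∑ i, U i k ^ 2 = ∑ k ∈ S, (1:ℝ) :=
            Finset.sum_congr rfl fun k _ => hcol k
        _ = S.card := by simp
        _ ≤ (j : ℝ) := by exact_mod_cast hcard
    have hg0 : ∀ i, 0 ≤ g i := fun i => sq_nonneg _
    have hgmono : ∀ i i' : Fin n, i ≤ i' → g i' ≤ g i := by
      intro i i' h
      rw [hg]
      exact pow_le_pow_left₀ (le_max_right _ _)
        (max_le_max (hmono i i' h) le_rfl) 2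
    calc 2 * ∑ k, μ k * q k - ∑ k, μ k ^ 2 ≤ ∑ k ∈ S, ∑ i, U i k ^ 2 * g i := hsum1
      _ = ∑ i, c i * g i := hswap
      _ ≤ ∑ i ∈ P, g i := sorted_weight_bound n j hj g c hg0 hgmono hc0 hc1 hcsum
  linarith

lemma spectral_data (n j : ℕ) (B : Matrix (Fin n) (Fin n) ℝ)
    (hB : B.PosSemidef) (hrank : B.rank ≤ j) :
    ∃ (μ : Fin n → ℝ) (W : Fin n → Fin n → ℝ),
      (∀ k, 0 ≤ μ k) ∧
      ((Finset.univ.filter (fun k : Fin n => μ k ≠ 0)).card ≤ j) ∧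
      (∀ a b, B a b = ∑ k, μ k * W a k * W b k) ∧
      (∀ k k', ∑ a, W a k * W a k' = if k = k' then 1 else 0) ∧
      (∀ a b, ∑ k, W a k * W b k = if a = b then 1 else 0) := by
  classical
  have hH : B.IsHermitian := hB.1
  set μ := hH.eigenvalues with hμdef
  set W : Matrix (Fin n) (Fin n) ℝ :=
    (Matrix.IsHermitian.eigenvectorUnitary hH : Matrix (Fin n) (Fin n) ℝ) with hWdef
  have hWmem : W ∈ Matrix.unitaryGroup (Fin n) ℝ := (Matrix.IsHermitian.eigenvectorUnitary hH).2
  have hWl : star W * W = 1 := (Matrix.mem_unitaryGroup_iff'.mp hWmem)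
  have hWr : W * star W = 1 := (Matrix.mem_unitaryGroup_iff.mp hWmem)
  refine ⟨μ, fun a k => W a k, fun k => hB.eigenvalues_nonneg k, ?_, ?_, ?_, ?_⟩
  · have h1 := hH.rank_eq_card_non_zero_eigs
    rw [h1] at hrank
    rwa [Fintype.card_subtype] at hrank
  · intro a b
    conv_lhs => rw [hH.spectral_theorem, Unitary.conjStarAlgAut_apply]
    rw [Matrix.mul_apply]
    simp only [Matrix.mul_diagonal, Matrix.star_apply, star_trivial, Function.comp_apply,
      RCLike.ofReal_real_eq_id, id_eq]
    exact Finset.sum_congr rfl fun k _ => by ring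
  · intro k k'
    have h1 := congrFun (congrFun hWl k) k'
    rw [Matrix.mul_apply] at h1
    simp only [Matrix.star_apply, star_trivial] at h1
    rw [Matrix.one_apply] at h1
    simpa [mul_comm] using h1
  · intro a b
    have h1 := congrFun (congrFun hWr a) b
    rw [Matrix.mul_apply] at h1
    simp only [Matrix.star_apply, star_trivial] at h1
    rw [Matrix.one_apply] at h1
    simpa using h1

end Helpers

/-- Joint maximum likelihood estimation for the spiked GOE model with unknown `σ²`.
With `Â_j = Σ_{i ≤ j} max(ℓ_i, 0) v_i v_iᵀ`, `σ̂²_j = ‖X − Â_j‖_F²/(n+1) > 0` and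
log-likelihood `L(A, s) = −(n(n+1)/4) log s − (n/(4s)) ‖X − A‖_F²`, one has
`L(B, s) ≤ L(Â_j, σ̂²_j)` for every positive semidefinite `B` of rank at most `j`
and every `s > 0`. -/
theorem spiked_goe_joint_mle (n : ℕ) (hn : 1 ≤ n)
    (X : Matrix (Fin n) (Fin n) ℝ) (ℓ : Fin n → ℝ) (v : Fin n → Fin n → ℝ)
    (hmono : ∀ i i' : Fin n, i ≤ i' → ℓ i' ≤ ℓ i)
    (horth : ∀ i i' : Fin n, ∑ a, v i a * v i' a = if i = i' then 1 else 0)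
    (hX : X = ∑ i, ℓ i • Matrix.vecMulVec (v i) (v i))
    (j : ℕ) (hj : j ≤ n)
    (Ahat : Matrix (Fin n) (Fin n) ℝ)
    (hAhat : Ahat = ∑ i ∈ Finset.univ.filter (fun i : Fin n => (i : ℕ) < j),
      max (ℓ i) 0 • Matrix.vecMulVec (v i) (v i))
    (sighatsq : ℝ)
    (hsighatsq : sighatsq = (∑ a, ∑ b, (X a b - Ahat a b) ^ 2) / ((n : ℝ) + 1))
    (hpos : 0 < sighatsq)
    (L : Matrix (Fin n) (Fin n) ℝ → ℝ → ℝ)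
    (hL : ∀ (A : Matrix (Fin n) (Fin n) ℝ) (s : ℝ),
      L A s = -((n : ℝ) * ((n : ℝ) + 1) / 4) * Real.log s
        - ((n : ℝ) / (4 * s)) * ∑ a, ∑ b, (X a b - A a b) ^ 2)
    (B : Matrix (Fin n) (Fin n) ℝ) (hB : B.PosSemidef) (hrank : B.rank ≤ j)
    (s : ℝ) (hs : 0 < s) :
    L B s ≤ L Ahat sighatsq := by
  classical
  -- completeness of v
  have hvcomp : ∀ a b : Fin n, ∑ i, v i a * v i b = if a = b then 1 else 0 := by
    have hVVt : Matrix.of v * (Matrix.of v).transpose = 1 := by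
      ext i i'
      rw [Matrix.mul_apply, Matrix.one_apply]
      simpa [Matrix.transpose_apply] using horth i i'
    have hVtV : (Matrix.of v).transpose * Matrix.of v = 1 := mul_eq_one_comm.mp hVVt
    intro a b
    have h1 := congrFun (congrFun hVtV a) b
    rw [Matrix.mul_apply, Matrix.one_apply] at h1
    simpa [Matrix.transpose_apply] using h1
  obtain ⟨μ, W, hμ0, hcard, hBent, hWcol, hWcomp⟩ := spectral_data n j B hB hrank
  set U : Fin n → Fin n → ℝ := fun i k => ∑ a, v i a * W a k with hU
  have hUcol : ∀ k, ∑ i, U i k ^ 2 = 1 := by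
    intro k
    calc ∑ i, U i k ^ 2 = ∑ x, (∑ a, W a k * v x a) * (∑ b, W b k * v x b) := by
          refine Finset.sum_congr rfl fun i _ => ?_
          rw [sq]
          congr 1 <;> exact Finset.sum_congr rfl fun a _ => by ring
      _ = ∑ a, ∑ b, (W a k * W b k) * (∑ x, v x a * v x b) :=
          contract n (fun x a => v x a) (fun x a => v x a) (fun a => W a k) (fun a => W a k)
      _ = ∑ a, W a k * W a k := by
          refine Finset.sum_congr rfl fun a _ => ?_
          have h2 : ∀ b, (W a k * W b k) * (∑ x, v x a * v x b)
              = if a = b then W a k * W b k else 0 := fun b => by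
            rw [hvcomp a b, mul_ite, mul_one, mul_zero]
          simp only [h2]
          rw [Finset.sum_ite_eq]
          simp
      _ = 1 := by simpa using hWcol k k
  have hUrow : ∀ i, ∑ k, U i k ^ 2 = 1 := by
    intro i
    calc ∑ k, U i k ^ 2 = ∑ x, (∑ a, v i a * W a x) * (∑ b, v i b * W b x) := by
          refine Finset.sum_congr rfl fun kk _ => ?_
          rw [sq]
      _ = ∑ a, ∑ b, (v i a * v i b) * (∑ x, W a x * W b x) :=
          contract n (fun x a => W a x) (fun x b => W b x) (fun a => v i a) (fun b => v i b)
      _ = ∑ a, v i a * v i a := by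
          refine Finset.sum_congr rfl fun a _ => ?_
          have h2 : ∀ b, (v i a * v i b) * (∑ x, W a x * W b x)
              = if a = b then v i a * v i b else 0 := fun b => by
            rw [hWcomp a b, mul_ite, mul_one, mul_zero]
          simp only [h2]
          rw [Finset.sum_ite_eq]
          simp
      _ = 1 := by simpa using horth i i
  -- entrywise formulas
  have hXent : ∀ a b, X a b = ∑ i, ℓ i * (v i a * v i b) := by
    intro a b
    rw [hX]
    rw [Matrix.sum_apply]
    exact Finset.sum_congr rfl fun i _ => by
      simp [Matrix.vecMulVec_apply, mul_assoc]
  have hAent : ∀ a b, Ahat a b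
      = ∑ i : Fin n, (if (i : ℕ) < j then max (ℓ i) 0 else 0) * (v i a * v i b) := by
    intro a b
    rw [hAhat]
    rw [Matrix.sum_apply, Finset.sum_filter]
    refine Finset.sum_congr rfl fun i _ => ?_
    by_cases h : (i : ℕ) < j <;>
      simp [h, Matrix.vecMulVec_apply, mul_assoc]
  set r : Fin n → ℝ := fun i => ℓ i - (if (i : ℕ) < j then max (ℓ i) 0 else 0) with hr
  have hXAent : ∀ a b, X a b - Ahat a b = ∑ i, r i * (v i a * v i b) := by
    intro a b
    rw [hXent, hAent, ← Finset.sum_sub_distrib]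
    exact Finset.sum_congr rfl fun i _ => by rw [hr]; ring
  have hRA : ∑ a, ∑ b, (X a b - Ahat a b) ^ 2 = ∑ i, r i ^ 2 := by
    simp only [hXAent]
    exact frob_sq n v horth r
  -- expansion of ‖X − B‖²
  have hBent' : ∀ a b, B a b = ∑ k, μ k * (W a k * W b k) := by
    intro a b
    rw [hBent a b]
    exact Finset.sum_congr rfl fun k _ => by ring
  have hX2 : ∑ a, ∑ b, X a b ^ 2 = ∑ i, ℓ i ^ 2 := by
    simp only [hXent]
    exact frob_sq n v horth ℓ
  have hB2 : ∑ a, ∑ b, B a b ^ 2 = ∑ k, μ k ^ 2 := by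
    simp only [hBent']
    exact frob_sq n (fun k a => W a k) (fun k k' => hWcol k k') μ
  have hXB : ∑ a, ∑ b, X a b * B a b = ∑ i, ∑ k, ℓ i * μ k * (U i k) ^ 2 := by
    calc ∑ a, ∑ b, X a b * B a b
        = ∑ a, ∑ b, (∑ i, ℓ i * (v i a * v i b)) * (∑ k, μ k * (W a k * W b k)) := by
          refine Finset.sum_congr rfl fun a _ => Finset.sum_congr rfl fun b _ => ?_
          rw [hXent, hBent']
      _ = ∑ i, ∑ k, ℓ i * μ k * (∑ a, v i a * W a k) ^ 2 :=
          frob_cross n v (fun k a => W a k) ℓ μ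
      _ = ∑ i, ∑ k, ℓ i * μ k * (U i k) ^ 2 := rfl
  have hRB : ∑ a, ∑ b, (X a b - B a b) ^ 2
      = ∑ i, ℓ i ^ 2 - 2 * (∑ i, ∑ k, ℓ i * μ k * (U i k) ^ 2) + ∑ k, μ k ^ 2 := by
    have hpt : ∀ a b : Fin n, (X a b - B a b) ^ 2
        = X a b ^ 2 - 2 * (X a b * B a b) + B a b ^ 2 := fun a b => by ring
    calc ∑ a, ∑ b, (X a b - B a b) ^ 2
        = (∑ a, ∑ b, X a b ^ 2) - 2 * (∑ a, ∑ b, X a b * B a b)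
            + (∑ a, ∑ b, B a b ^ 2) := by
          simp only [hpt, Finset.sum_add_distrib, Finset.sum_sub_distrib, ← Finset.mul_sum]
      _ = ∑ i, ℓ i ^ 2 - 2 * (∑ i, ∑ k, ℓ i * μ k * (U i k) ^ 2) + ∑ k, μ k ^ 2 := by
          rw [hX2, hB2, hXB]
  -- the key matrix inequality
  have hmid : ∑ k, μ k * (∑ i, ℓ i * U i k ^ 2) = ∑ i, ∑ k, ℓ i * μ k * (U i k) ^ 2 := by
    calc ∑ k, μ k * (∑ i, ℓ i * U i k ^ 2)
        = ∑ k, ∑ i, ℓ i * μ k * (U i k) ^ 2 := by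
          refine Finset.sum_congr rfl fun k _ => ?_
          rw [Finset.mul_sum]
          exact Finset.sum_congr rfl fun i _ => by ring
      _ = ∑ i, ∑ k, ℓ i * μ k * (U i k) ^ 2 := Finset.sum_comm
  have key : (∑ a, ∑ b, (X a b - Ahat a b) ^ 2) ≤ ∑ a, ∑ b, (X a b - B a b) ^ 2 := by
    rw [hRA, hRB, ← hmid]
    exact key_ineq n j hj ℓ hmono μ hμ0 hcard U hUcol hUrow
  -- analytic finish
  set RA := ∑ a, ∑ b, (X a b - Ahat a b) ^ 2 with hRAdef
  set RB := ∑ a, ∑ b, (X a b - B a b) ^ 2 with hRBdef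
  have hn1 : (0:ℝ) < (n : ℝ) + 1 := by positivity
  have hsig : sighatsq * ((n : ℝ) + 1) = RA := by
    rw [hsighatsq]
    field_simp
  have hRApos : 0 < RA := by nlinarith
  rw [hL, hL]
  have hc0 : (0:ℝ) ≤ (n : ℝ) * ((n : ℝ) + 1) / 4 := by positivity
  have e1 : (n : ℝ) / (4 * s) * RA = ((n : ℝ) * ((n : ℝ) + 1) / 4) * (sighatsq / s) := by
    rw [← hsig]
    field_simp
  have e2 : (n : ℝ) / (4 * sighatsq) * RA = (n : ℝ) * ((n : ℝ) + 1) / 4 := by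
    rw [← hsig]
    field_simp
  have hlog : Real.log sighatsq - Real.log s ≤ sighatsq / s - 1 := by
    have h := Real.log_le_sub_one_of_pos (div_pos hpos hs)
    rwa [Real.log_div (ne_of_gt hpos) (ne_of_gt hs)] at h
  have e3 : ((n : ℝ) * ((n : ℝ) + 1) / 4) * (Real.log sighatsq - Real.log s)
      ≤ ((n : ℝ) * ((n : ℝ) + 1) / 4) * (sighatsq / s) - (n : ℝ) * ((n : ℝ) + 1) / 4 := by
    have h1 := mul_le_mul_of_nonneg_left hlog hc0
    have h2 : ((n : ℝ) * ((n : ℝ) + 1) / 4) * (sighatsq / s - 1)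
        = ((n : ℝ) * ((n : ℝ) + 1) / 4) * (sighatsq / s) - (n : ℝ) * ((n : ℝ) + 1) / 4 := by
      ring
    linarith
  have e4 : (n : ℝ) / (4 * s) * RA ≤ (n : ℝ) / (4 * s) * RB :=
    mul_le_mul_of_nonneg_left key (by positivity)
  have e5 : ((n : ℝ) * ((n : ℝ) + 1) / 4) * Real.log sighatsq
      - ((n : ℝ) * ((n : ℝ) + 1) / 4) * Real.log s
      = ((n : ℝ) * ((n : ℝ) + 1) / 4) * (Real.log sighatsq - Real.log s) := by ring
  linarith [e3, e4, e1.symm ▸ e4]
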